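/- Let d ∈ ℤ≥1, L ∈ ℤ≥1 even, g > 0, Λ = (ℤ/Lℤ)^d. Then for every self-adjoint γ on h = ℓ²(Λ×{↑,↓}) with 0 ≤ γ ≤ 1 and Tr(γ) = |Λ|, one has 𝓔_HF(γ) ≥ (g/2)|Λ| + min over all families w = (w⃗_x)_{x∈Λ} with w⃗_x ∈ ℝ³, |w⃗_x| ≤ 2, of { Tr[ (T⊗1 − g Σ_{x∈Λ} E_{x,x}⊗(w⃗_x·σ⃗))_− ] + (g/2) Σ_{x∈Λ} |w⃗_x|² }, where A_− := (A − |A|)/2 denotes the negative part of a Hermitian matrix A (so Tr[A_−] is the sum of its negative eigenvalues). -/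

import Mathlib

open Matrix
open scoped Kronecker BigOperators ComplexOrder

/-- The discrete torus `Λ = (ℤ/Lℤ)^d`. -/
abbrev Lam (d L : ℕ) := Fin d → ZMod L

/-- The dispersion relation `ω_ξ = -∑_ν cos(ξ_ν)`, with the dual lattice
`Λ* = (2π/L)(ℤ/Lℤ)^d` identified with `Λ`. -/
noncomputable def omega (d L : ℕ) (ξ : Lam d L) : ℝ :=
  - ∑ ν, Real.cos (2 * Real.pi * ((ξ ν).val : ℝ) / (L : ℝ))

/-- The torus distance of `z ∈ ℤ/Lℤ` to `0`. -/
def zdist (L : ℕ) (z : ZMod L) : ℕ := min z.val (L - z.val)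

/-- The nearest-neighbour hopping matrix `T` on `ℓ²(Λ)`:
`T x y = -1` if the torus `ℓ¹`-distance of `x` and `y` is `1`, and `0` otherwise. -/
noncomputable def hopT (d L : ℕ) [NeZero L] : Matrix (Lam d L) (Lam d L) ℂ :=
  Matrix.of fun x y => if (∑ ν, zdist L (x ν - y ν)) = 1 then (-1 : ℂ) else 0

/-- The gauge involution `G`, i.e. multiplication by `(-1)^x = (-1)^{x₁+⋯+x_d}`. -/
noncomputable def gaugeG (d L : ℕ) [NeZero L] : Matrix (Lam d L) (Lam d L) ℂ :=
  Matrix.diagonal fun x => (-1 : ℂ) ^ (∑ ν, (x ν).val)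

/-- Pauli matrices. -/
noncomputable def sigma1 : Matrix (Fin 2) (Fin 2) ℂ := !![0, 1; 1, 0]
noncomputable def sigma2 : Matrix (Fin 2) (Fin 2) ℂ := !![0, Complex.I; -Complex.I, 0]
noncomputable def sigma3 : Matrix (Fin 2) (Fin 2) ℂ := !![1, 0; 0, -1]

/-- `a⃗ · σ⃗` for a vector `a⃗ ∈ ℝ³`. -/
noncomputable def pauliDot (a : EuclideanSpace ℝ (Fin 3)) : Matrix (Fin 2) (Fin 2) ℂ :=
  (a 0 : ℂ) • sigma1 + (a 1 : ℂ) • sigma2 + (a 2 : ℂ) • sigma3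

/-- The 2×2 spin block `γ_x` of a one-particle density matrix on `ℓ²(Λ)⊗ℂ²`. -/
noncomputable def spinBlock {d L : ℕ} [NeZero L]
    (γ : Matrix (Lam d L × Fin 2) (Lam d L × Fin 2) ℂ) (x : Lam d L) :
    Matrix (Fin 2) (Fin 2) ℂ :=
  Matrix.of fun σ τ => γ (x, σ) (x, τ)

/-- The Hartree--Fock functional
`𝓔_HF(γ) = Tr[(T⊗1)γ] + (g/2) ∑_x (ρ_x² - |v⃗_x|²)`. -/
noncomputable def Ehf (d L : ℕ) [NeZero L] (g : ℝ)
    (γ : Matrix (Lam d L × Fin 2) (Lam d L × Fin 2) ℂ) : ℝ :=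
  (((hopT d L) ⊗ₖ (1 : Matrix (Fin 2) (Fin 2) ℂ)) * γ).trace.re
    + g / 2 * ∑ x : Lam d L,
      (((spinBlock γ x).trace.re) ^ 2
        - (((sigma1 * spinBlock γ x).trace.re) ^ 2
            + ((sigma2 * spinBlock γ x).trace.re) ^ 2
            + ((sigma3 * spinBlock γ x).trace.re) ^ 2))

/-- The constraint set `0 ≤ γ ≤ 1`, `Tr γ = N` of reduced one-particle density matrices. -/
def IsOPDM {d L : ℕ} [NeZero L] (N : ℕ)
    (γ : Matrix (Lam d L × Fin 2) (Lam d L × Fin 2) ℂ) : Prop :=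
  γ.PosSemidef ∧ ((1 : Matrix (Lam d L × Fin 2) (Lam d L × Fin 2) ℂ) - γ).PosSemidef
    ∧ γ.trace = (N : ℂ)

/-- Spectral projection `1[A < 0]` onto the negative eigenvalues of a Hermitian matrix
(junk value `0` if `A` is not Hermitian). -/
noncomputable def specProjNeg {n : Type*} [Fintype n] [DecidableEq n]
    (A : Matrix n n ℂ) : Matrix n n ℂ :=
  if hA : A.IsHermitian then
    (hA.eigenvectorUnitary : Matrix n n ℂ)
      * Matrix.diagonal (fun i => if hA.eigenvalues i < 0 then (1 : ℂ) else 0)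
      * star (hA.eigenvectorUnitary : Matrix n n ℂ)
  else 0

/-- Spectral projection `1[A ≤ 0]` onto the nonpositive eigenvalues of a Hermitian matrix
(junk value `0` if `A` is not Hermitian). -/
noncomputable def specProjNonpos {n : Type*} [Fintype n] [DecidableEq n]
    (A : Matrix n n ℂ) : Matrix n n ℂ :=
  if hA : A.IsHermitian then
    (hA.eigenvectorUnitary : Matrix n n ℂ)
      * Matrix.diagonal (fun i => if hA.eigenvalues i ≤ 0 then (1 : ℂ) else 0)
      * star (hA.eigenvectorUnitary : Matrix n n ℂ)
  else 0

/-- The positive square root `√A` of a positive semidefinite Hermitian matrix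
(junk value `0` if `A` is not Hermitian). -/
noncomputable def matSqrt {n : Type*} [Fintype n] [DecidableEq n]
    (A : Matrix n n ℂ) : Matrix n n ℂ :=
  if hA : A.IsHermitian then
    (hA.eigenvectorUnitary : Matrix n n ℂ)
      * Matrix.diagonal (fun i => (Real.sqrt (hA.eigenvalues i) : ℂ))
      * star (hA.eigenvectorUnitary : Matrix n n ℂ)
  else 0

/-- The negative part `A₋ = (A - |A|)/2` of a Hermitian matrix, i.e. the spectral
function `λ ↦ min λ 0` applied to `A` (junk value `0` if `A` is not Hermitian). -/
noncomputable def matNegPart {n : Type*} [Fintype n] [DecidableEq n]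
    (A : Matrix n n ℂ) : Matrix n n ℂ :=
  if hA : A.IsHermitian then
    (hA.eigenvectorUnitary : Matrix n n ℂ)
      * Matrix.diagonal (fun i => ((min (hA.eigenvalues i) 0 : ℝ) : ℂ))
      * star (hA.eigenvectorUnitary : Matrix n n ℂ)
  else 0

/-- The sign `(-1)^x = (-1)^{x₁+⋯+x_d}` of a lattice site, as a real number. -/
noncomputable def latSign {d L : ℕ} (x : Lam d L) : ℝ := (-1 : ℝ) ^ (∑ ν, (x ν).val)

/-- The spin values `↑ ≡ +1`, `↓ ≡ -1`. -/
noncomputable def spinVal (τ : Fin 2) : ℝ := if τ = 0 then 1 else -1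

/-! ### Auxiliary lemmas -/

section Aux

variable {n : Type*} [Fintype n] [DecidableEq n]

lemma psd_diag {A : Matrix n n ℂ} (hA : A.PosSemidef) (i : n) : 0 ≤ A i i := by
  exact hA.diag_nonneg

lemma trace_diagonal_mul' (d : n → ℂ) (B : Matrix n n ℂ) :
    (Matrix.diagonal d * B).trace = ∑ i, d i * B i i := by
  simp [Matrix.trace, Matrix.mul_apply, Matrix.diagonal, Matrix.diag]

lemma trace_conj_diag {A : Matrix n n ℂ} (hA : A.IsHermitian) (γ : Matrix n n ℂ) :
    (A * γ).trace = ∑ i, (hA.eigenvalues i : ℂ) *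
      ((star (hA.eigenvectorUnitary : Matrix n n ℂ) * γ *
        (hA.eigenvectorUnitary : Matrix n n ℂ)) i i) := by
  set U := (hA.eigenvectorUnitary : Matrix n n ℂ) with hUdef
  set D := Matrix.diagonal (RCLike.ofReal ∘ hA.eigenvalues : n → ℂ) with hD
  have h1 : (A * γ).trace = (D * (star U * γ * U)).trace := by
    conv_lhs => rw [hA.spectral_theorem, Unitary.conjStarAlgAut_apply]
    rw [show U * D * star U * γ = U * (D * (star U * γ)) from by simp [Matrix.mul_assoc]]
    rw [Matrix.trace_mul_comm U (D * (star U * γ))]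
    simp [Matrix.mul_assoc]
  rw [h1, trace_diagonal_mul']
  simp [hD, Function.comp]

/-- Key bound: `Tr[Aγ] ≥ ∑ min(λᵢ,0)` for `0 ≤ γ ≤ 1`. -/
lemma trace_mul_ge_sum_min {A γ : Matrix n n ℂ} (hA : A.IsHermitian)
    (hγ : γ.PosSemidef) (hγ1 : ((1 : Matrix n n ℂ) - γ).PosSemidef) :
    ∑ i, min (hA.eigenvalues i) 0 ≤ (A * γ).trace.re := by
  set U := (hA.eigenvectorUnitary : Matrix n n ℂ) with hUdef
  set B := star U * γ * U with hB
  have hBpsd : B.PosSemidef := hγ.conjTranspose_mul_mul_same U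
  have hB1psd : ((1 : Matrix n n ℂ) - B).PosSemidef := by
    have h := hγ1.conjTranspose_mul_mul_same U
    have : star U * (1 - γ) * U = 1 - B := by
      rw [Matrix.mul_sub, Matrix.sub_mul, Matrix.mul_one,
        Unitary.coe_star_mul_self hA.eigenvectorUnitary, hB]
    rw [Matrix.star_eq_conjTranspose] at this
    rwa [this] at h
  rw [trace_conj_diag hA γ, ← hB]
  rw [Complex.re_sum]
  apply Finset.sum_le_sum
  intro i _
  have hdiag0 : 0 ≤ B i i := psd_diag hBpsd i
  have hdiag1 : 0 ≤ ((1 : Matrix n n ℂ) - B) i i := psd_diag hB1psd i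
  have h0 : 0 ≤ (B i i).re := by
    have := (Complex.le_def.mp hdiag0).1; simpa using this
  have him : (B i i).im = 0 := by
    have := (Complex.le_def.mp hdiag0).2; simpa using this.symm
  have h1 : (B i i).re ≤ 1 := by
    have := (Complex.le_def.mp hdiag1).1
    simp only [Matrix.sub_apply, Matrix.one_apply_eq, Complex.sub_re, Complex.one_re,
      Complex.zero_re] at this
    linarith
  have : ((hA.eigenvalues i : ℂ) * B i i).re = hA.eigenvalues i * (B i i).re := by
    simp [Complex.mul_re, him]
  rw [this]
  rcases le_or_gt (hA.eigenvalues i) 0 with h | h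
  · rw [min_eq_left h]; nlinarith
  · rw [min_eq_right h.le]; positivity

lemma trace_conj_unitary {A : Matrix n n ℂ} (hA : A.IsHermitian) (D : Matrix n n ℂ) :
    ((hA.eigenvectorUnitary : Matrix n n ℂ) * D
      * star (hA.eigenvectorUnitary : Matrix n n ℂ)).trace = D.trace := by
  rw [Matrix.trace_mul_cycle, Unitary.coe_star_mul_self hA.eigenvectorUnitary, Matrix.one_mul]

lemma trace_matNegPart {A : Matrix n n ℂ} (hA : A.IsHermitian) :
    (matNegPart A).trace = ∑ i, ((min (hA.eigenvalues i) 0 : ℝ) : ℂ) := by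
  rw [matNegPart, dif_pos hA, trace_conj_unitary hA, Matrix.trace_diagonal]

lemma trace_sq_eq_sum_sq {A : Matrix n n ℂ} (hA : A.IsHermitian) :
    (A * A).trace = ((∑ i, (hA.eigenvalues i) ^ 2 : ℝ) : ℂ) := by
  have h : A * A = (hA.eigenvectorUnitary : Matrix n n ℂ)
      * (Matrix.diagonal (RCLike.ofReal ∘ hA.eigenvalues)
          * Matrix.diagonal (RCLike.ofReal ∘ hA.eigenvalues))
      * star (hA.eigenvectorUnitary : Matrix n n ℂ) := by
    conv_lhs => rw [hA.spectral_theorem, Unitary.conjStarAlgAut_apply]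
    simp only [Matrix.mul_assoc]
    congr 2
    rw [← Matrix.mul_assoc, Unitary.coe_star_mul_self hA.eigenvectorUnitary, Matrix.one_mul]
  rw [h, trace_conj_unitary hA, Matrix.diagonal_mul_diagonal, Matrix.trace_diagonal]
  push_cast
  ring_nf
  simp [Function.comp, pow_two]

lemma trace_mul_self_eq_normSq {A : Matrix n n ℂ} (hA : A.IsHermitian) :
    (A * A).trace = ((∑ i, ∑ j, Complex.normSq (A i j) : ℝ) : ℂ) := by
  have hconj : ∀ i j, A j i = (starRingEnd ℂ) (A i j) := fun i j => by
    conv_lhs => rw [← hA.eq]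
    simp [Matrix.conjTranspose_apply]
  rw [Matrix.trace]
  push_cast
  simp only [Matrix.diag_apply, Matrix.mul_apply]
  congr 1; ext i; congr 1; ext j
  rw [hconj i j, Complex.mul_conj]

/-- Lower bound on the trace of the negative part, given an entrywise bound. -/
lemma negpart_trace_ge {A : Matrix n n ℂ} (hA : A.IsHermitian) (C : ℝ)
    (hC : ∀ i j, Complex.normSq (A i j) ≤ C) :
    -(((Fintype.card n : ℝ) + (Fintype.card n : ℝ) ^ 2 * C) / 2)
      ≤ (matNegPart A).trace.re := by
  have hsumeq : (∑ i, (hA.eigenvalues i) ^ 2 : ℝ)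
      = ∑ i, ∑ j, Complex.normSq (A i j) := by
    have := (trace_sq_eq_sum_sq hA).symm.trans (trace_mul_self_eq_normSq hA)
    exact_mod_cast this
  have hsum : (∑ i, (hA.eigenvalues i) ^ 2 : ℝ) ≤ (Fintype.card n : ℝ) ^ 2 * C := by
    rw [hsumeq]
    calc (∑ i, ∑ j, Complex.normSq (A i j) : ℝ)
        ≤ ∑ _i : n, ∑ _j : n, C := by
          apply Finset.sum_le_sum; intro i _; apply Finset.sum_le_sum; intro j _; exact hC i j
      _ = (Fintype.card n : ℝ) ^ 2 * C := by
          simp [Finset.sum_const, Finset.card_univ]; ring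
  have htr : (matNegPart A).trace.re = ∑ i, min (hA.eigenvalues i) 0 := by
    rw [trace_matNegPart hA]
    rw [Complex.re_sum]
    simp
  rw [htr]
  have hlb : ∀ i : n, -((1 + (hA.eigenvalues i) ^ 2) / 2) ≤ min (hA.eigenvalues i) 0 := by
    intro i
    rcases le_or_gt (hA.eigenvalues i) 0 with h | h
    · rw [min_eq_left h]; nlinarith [sq_nonneg (hA.eigenvalues i + 1)]
    · rw [min_eq_right h.le]; nlinarith [sq_nonneg (hA.eigenvalues i)]
  calc -(((Fintype.card n : ℝ) + (Fintype.card n : ℝ) ^ 2 * C) / 2)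
      ≤ -(((Fintype.card n : ℝ) + ∑ i, (hA.eigenvalues i) ^ 2) / 2) := by linarith
    _ = ∑ i : n, -((1 + (hA.eigenvalues i) ^ 2) / 2) := by
        rw [Finset.sum_neg_distrib]
        rw [← Finset.sum_div]
        congr 1
        rw [Finset.sum_add_distrib]
        simp [Finset.card_univ]
    _ ≤ ∑ i, min (hA.eigenvalues i) 0 := Finset.sum_le_sum fun i _ => hlb i

lemma herm_real_smul (r : ℝ) {A : Matrix n n ℂ}
    (hA : A.IsHermitian) : ((r : ℂ) • A).IsHermitian := by
  unfold Matrix.IsHermitian at *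
  rw [Matrix.conjTranspose_smul, hA]
  simp

lemma herm_sum {ι : Type*} (s : Finset ι) (f : ι → Matrix n n ℂ)
    (h : ∀ i ∈ s, (f i).IsHermitian) : (∑ i ∈ s, f i).IsHermitian := by
  unfold Matrix.IsHermitian at *
  rw [Matrix.conjTranspose_sum]
  exact Finset.sum_congr rfl h

lemma kron_herm {m : Type*} [Fintype m] [DecidableEq m]
    {A : Matrix m m ℂ} {B : Matrix n n ℂ} (hA : A.IsHermitian) (hB : B.IsHermitian) :
    (A ⊗ₖ B).IsHermitian := by
  unfold Matrix.IsHermitian at *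
  ext ⟨a, b⟩ ⟨c, e⟩
  simp only [Matrix.conjTranspose_apply, Matrix.kroneckerMap_apply, star_mul']
  rw [← Matrix.conjTranspose_apply A, ← Matrix.conjTranspose_apply B, hA, hB]

lemma stdBasis_herm {m : Type*} [Fintype m] [DecidableEq m] (x : m) :
    (Matrix.single x x (1 : ℂ)).IsHermitian := by
  unfold Matrix.IsHermitian
  ext a b
  simp [Matrix.conjTranspose_apply, Matrix.single, and_comm, apply_ite]

end Aux

lemma zdist_neg (L : ℕ) [NeZero L] (z : ZMod L) : zdist L (-z) = zdist L z := by
  rcases eq_or_ne z 0 with h | h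
  · simp [h]
  · unfold zdist
    rw [ZMod.neg_val, if_neg h, Nat.sub_sub_self (ZMod.val_lt z).le, min_comm]

lemma hopT_herm (d L : ℕ) [NeZero L] : (hopT d L).IsHermitian := by
  unfold Matrix.IsHermitian
  ext x y
  have h : ∀ ν : Fin d, zdist L (x ν - y ν) = zdist L (y ν - x ν) := by
    intro ν; rw [← zdist_neg L (y ν - x ν)]; ring_nf
  simp only [Matrix.conjTranspose_apply, hopT, Matrix.of_apply]
  rw [Finset.sum_congr rfl fun ν _ => h ν]
  split <;> simp

lemma sigma1_herm : sigma1.IsHermitian := by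
  unfold Matrix.IsHermitian sigma1
  ext i j; fin_cases i <;> fin_cases j <;> simp [Matrix.conjTranspose_apply]

lemma sigma2_herm : sigma2.IsHermitian := by
  unfold Matrix.IsHermitian sigma2
  ext i j; fin_cases i <;> fin_cases j <;> simp [Matrix.conjTranspose_apply]

lemma sigma3_herm : sigma3.IsHermitian := by
  unfold Matrix.IsHermitian sigma3
  ext i j; fin_cases i <;> fin_cases j <;> simp [Matrix.conjTranspose_apply]

lemma pauliDot_herm (a : EuclideanSpace ℝ (Fin 3)) : (pauliDot a).IsHermitian := by
  unfold pauliDot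
  exact ((herm_real_smul _ sigma1_herm).add (herm_real_smul _ sigma2_herm)).add
    (herm_real_smul _ sigma3_herm)

/-- Hermiticity of the effective Hamiltonian. -/
lemma Hw_herm (d L : ℕ) [NeZero L] (g : ℝ) (w : Lam d L → EuclideanSpace ℝ (Fin 3)) :
    (hopT d L ⊗ₖ (1 : Matrix (Fin 2) (Fin 2) ℂ)
      - (g : ℂ) • ∑ x : Lam d L,
          Matrix.single x x (1 : ℂ) ⊗ₖ pauliDot (w x)).IsHermitian := by
  apply Matrix.IsHermitian.sub
  · exact kron_herm (hopT_herm d L) Matrix.isHermitian_one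
  · apply herm_real_smul
    apply herm_sum
    intro x _
    exact kron_herm (stdBasis_herm x) (pauliDot_herm (w x))

lemma trace_kron_std {d L : ℕ} [NeZero L] (x : Lam d L)
    (M : Matrix (Fin 2) (Fin 2) ℂ) (γ : Matrix (Lam d L × Fin 2) (Lam d L × Fin 2) ℂ) :
    ((Matrix.single x x (1 : ℂ) ⊗ₖ M) * γ).trace
      = (M * spinBlock γ x).trace := by
  simp only [Matrix.trace, Matrix.diag_apply, Matrix.mul_apply, Fintype.sum_prod_type,
    Matrix.kroneckerMap_apply, Matrix.single, Matrix.of_apply, spinBlock]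
  simp only [ite_mul, one_mul, zero_mul, Finset.sum_ite_irrel, Finset.sum_const_zero]
  simp [ite_and, Finset.sum_ite_eq, Fin.sum_univ_two]

lemma spinBlock_psd {d L : ℕ} [NeZero L]
    {γ : Matrix (Lam d L × Fin 2) (Lam d L × Fin 2) ℂ} (h0 : γ.PosSemidef)
    (x : Lam d L) : (spinBlock γ x).PosSemidef :=
  h0.submatrix (fun σ => (x, σ))

/-- The spin vector has length at most `2`. -/
lemma spin_vec_bound {d L : ℕ} [NeZero L]
    {γ : Matrix (Lam d L × Fin 2) (Lam d L × Fin 2) ℂ} (h0 : γ.PosSemidef)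
    (h1 : ((1 : Matrix (Lam d L × Fin 2) (Lam d L × Fin 2) ℂ) - γ).PosSemidef)
    (x : Lam d L) :
    ((sigma1 * spinBlock γ x).trace.re) ^ 2 + ((sigma2 * spinBlock γ x).trace.re) ^ 2
      + ((sigma3 * spinBlock γ x).trace.re) ^ 2 ≤ 4 := by
  set B := spinBlock γ x with hBdef
  have hBpsd : B.PosSemidef := spinBlock_psd h0 x
  have hBherm : B.IsHermitian := hBpsd.1
  have h00 : 0 ≤ B 0 0 := psd_diag hBpsd 0
  have h11 : 0 ≤ B 1 1 := psd_diag hBpsd 1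
  have h00im : (B 0 0).im = 0 := ((Complex.le_def.mp h00).2).symm
  have h11im : (B 1 1).im = 0 := ((Complex.le_def.mp h11).2).symm
  have hconj : B 1 0 = (starRingEnd ℂ) (B 0 1) := by
    conv_lhs => rw [← hBherm.eq]
    simp [Matrix.conjTranspose_apply]
  have hdet : 0 ≤ (B.det).re := by
    rw [hBherm.det_eq_prod_eigenvalues]
    simp only [Fin.prod_univ_two]
    norm_cast
    exact mul_nonneg (hBpsd.eigenvalues_nonneg 0) (hBpsd.eigenvalues_nonneg 1)
  rw [Matrix.det_fin_two] at hdet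
  rw [hconj] at hdet
  set a := (B 0 0).re
  set dd := (B 1 1).re
  set p := (B 0 1).re
  set q := (B 0 1).im
  have h00' : a ≤ 1 := by
    have := (Complex.le_def.mp (psd_diag h1 (x, 0))).1
    simp only [Matrix.sub_apply, Matrix.one_apply_eq, Complex.sub_re, Complex.one_re,
      Complex.zero_re] at this
    have hB00 : a = (γ (x, 0) (x, 0)).re := rfl
    linarith [hB00 ▸ this]
  have h11' : dd ≤ 1 := by
    have := (Complex.le_def.mp (psd_diag h1 (x, 1))).1
    simp only [Matrix.sub_apply, Matrix.one_apply_eq, Complex.sub_re, Complex.one_re,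
      Complex.zero_re] at this
    have hB11 : dd = (γ (x, 1) (x, 1)).re := rfl
    linarith [hB11 ▸ this]
  have h00re : 0 ≤ a := (Complex.le_def.mp h00).1
  have h11re : 0 ≤ dd := (Complex.le_def.mp h11).1
  have hdet' : 0 ≤ a * dd - (p ^ 2 + q ^ 2) := by
    have : (B 0 0 * B 1 1 - B 0 1 * (starRingEnd ℂ) (B 0 1)).re
        = a * dd - (p ^ 2 + q ^ 2) := by
      simp [Complex.mul_re, Complex.sub_re, h00im, h11im, Complex.conj_re, Complex.conj_im]
      ring
    linarith [this ▸ hdet]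
  have t1 : (sigma1 * B).trace.re = p + p := by
    simp [Matrix.trace, Matrix.mul_apply, Fin.sum_univ_two, Matrix.vecMul, dotProduct, Matrix.vecHead, Matrix.vecTail,
      Matrix.cons_val_zero, Matrix.cons_val_one, Matrix.head_cons, sigma1, hconj,
      Complex.add_re, Complex.conj_re]
    rfl
  have t2 : (sigma2 * B).trace.re = q + q := by
    simp [Matrix.trace, Matrix.mul_apply, Fin.sum_univ_two, Matrix.vecMul, dotProduct, Matrix.vecHead, Matrix.vecTail,
      Matrix.cons_val_zero, Matrix.cons_val_one, Matrix.head_cons, sigma2, hconj,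
      Complex.add_re, Complex.mul_re, Complex.conj_re, Complex.conj_im, Complex.I_re,
      Complex.I_im]
    rfl
  have t3 : (sigma3 * B).trace.re = a - dd := by
    simp [Matrix.trace, Matrix.mul_apply, Fin.sum_univ_two, Matrix.vecMul, dotProduct, Matrix.vecHead, Matrix.vecTail,
      Matrix.cons_val_zero, Matrix.cons_val_one, Matrix.head_cons, sigma3, Complex.sub_re,
      Complex.add_re, Complex.mul_re, Complex.neg_re, Complex.neg_im, Complex.one_re,
      Complex.one_im]
    ring
  rw [t1, t2, t3]
  nlinarith [sq_nonneg (a - dd), sq_nonneg (a + dd)]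

lemma coord_le_norm (a : EuclideanSpace ℝ (Fin 3)) (i : Fin 3) : |a i| ≤ ‖a‖ := by
  rw [EuclideanSpace.norm_eq, ← Real.sqrt_sq_eq_abs]
  apply Real.sqrt_le_sqrt
  have : ‖a i‖ ^ 2 ≤ ∑ j, ‖a j‖ ^ 2 :=
    Finset.single_le_sum (fun j _ => sq_nonneg ‖a j‖) (Finset.mem_univ i)
  simpa [Real.norm_eq_abs, sq_abs] using this

lemma pauliDot_abs_le (a : EuclideanSpace ℝ (Fin 3)) (ha : ‖a‖ ≤ 2) (σ τ : Fin 2) :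
    ‖pauliDot a σ τ‖ ≤ 6 := by
  have h0 : |a 0| ≤ 2 := (coord_le_norm a 0).trans ha
  have h1 : |a 1| ≤ 2 := (coord_le_norm a 1).trans ha
  have h2 : |a 2| ≤ 2 := (coord_le_norm a 2).trans ha
  have key : ∀ z1 z2 z3 : ℂ, ‖z1 + z2 + z3‖
      ≤ ‖z1‖ + ‖z2‖ + ‖z3‖ := by
    intro z1 z2 z3
    calc ‖z1 + z2 + z3‖ ≤ ‖z1 + z2‖ + ‖z3‖ :=
          norm_add_le _ _
      _ ≤ ‖z1‖ + ‖z2‖ + ‖z3‖ := by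
          linarith [norm_add_le z1 z2]
  have hval : pauliDot a σ τ = (a 0 : ℂ) * sigma1 σ τ + (a 1 : ℂ) * sigma2 σ τ
      + (a 2 : ℂ) * sigma3 σ τ := by
    simp [pauliDot]
  rw [hval]
  have hs : ∀ (M : Matrix (Fin 2) (Fin 2) ℂ), (∀ i j, ‖M i j‖ ≤ 1) →
      ∀ (r : ℝ), |r| ≤ 2 → ‖(r : ℂ) * M σ τ‖ ≤ 2 := by
    intro M hM r hr
    rw [norm_mul, Complex.norm_real, Real.norm_eq_abs]
    calc |r| * ‖M σ τ‖ ≤ 2 * 1 :=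
      mul_le_mul hr (hM σ τ) (norm_nonneg _) (by norm_num)
    _ = 2 := by norm_num
  have e1 : ∀ i j, ‖sigma1 i j‖ ≤ 1 := by
    intro i j; fin_cases i <;> fin_cases j <;> simp [sigma1]
  have e2 : ∀ i j, ‖sigma2 i j‖ ≤ 1 := by
    intro i j; fin_cases i <;> fin_cases j <;> simp [sigma2]
  have e3 : ∀ i j, ‖sigma3 i j‖ ≤ 1 := by
    intro i j; fin_cases i <;> fin_cases j <;> simp [sigma3]
  calc ‖_‖ ≤ _ := key _ _ _
    _ ≤ 2 + 2 + 2 := by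
        gcongr <;> [exact hs _ e1 _ h0; exact hs _ e2 _ h1; exact hs _ e3 _ h2]
    _ = 6 := by norm_num

lemma sum_kron_apply {d L : ℕ} [NeZero L] (w : Lam d L → EuclideanSpace ℝ (Fin 3))
    (y z : Lam d L) (σ τ : Fin 2) :
    (∑ x : Lam d L, Matrix.single x x (1 : ℂ) ⊗ₖ pauliDot (w x)) (y, σ) (z, τ)
      = if y = z then pauliDot (w y) σ τ else 0 := by
  simp only [Matrix.sum_apply, Matrix.kroneckerMap_apply, Matrix.single,
    Matrix.of_apply, ite_and, ite_mul, one_mul, zero_mul]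
  rcases eq_or_ne y z with h | h
  · subst h
    simp [Finset.sum_ite_eq]
  · rw [if_neg h, Finset.sum_eq_zero]
    intro x _
    rcases eq_or_ne x y with h2 | h2
    · subst h2; rw [if_pos rfl, if_neg h]
    · rw [if_neg h2]

/-- Entrywise bound on the effective Hamiltonian. -/
lemma Hw_entry_bound (d L : ℕ) [NeZero L] (g : ℝ) (hg : 0 ≤ g)
    (w : Lam d L → EuclideanSpace ℝ (Fin 3)) (hw : ∀ x, ‖w x‖ ≤ 2)
    (a b : Lam d L × Fin 2) :
    Complex.normSq ((hopT d L ⊗ₖ (1 : Matrix (Fin 2) (Fin 2) ℂ)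
      - (g : ℂ) • ∑ x : Lam d L,
          Matrix.single x x (1 : ℂ) ⊗ₖ pauliDot (w x)) a b)
      ≤ (1 + 6 * g) ^ 2 := by
  obtain ⟨y, σ⟩ := a
  obtain ⟨z, τ⟩ := b
  have habs : ‖(hopT d L ⊗ₖ (1 : Matrix (Fin 2) (Fin 2) ℂ)
      - (g : ℂ) • ∑ x : Lam d L,
          Matrix.single x x (1 : ℂ) ⊗ₖ pauliDot (w x)) (y, σ) (z, τ)‖
      ≤ 1 + 6 * g := by
    rw [Matrix.sub_apply, Matrix.smul_apply, sum_kron_apply]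
    have htri : ∀ u v : ℂ, ‖u - v‖ ≤ ‖u‖ + ‖v‖ := by
      intro u v
      exact norm_sub_le u v
    calc ‖_‖ ≤ _ := htri _ _
      _ ≤ 1 + 6 * g := by
        gcongr
        · simp only [Matrix.kroneckerMap_apply, hopT, Matrix.of_apply, Matrix.one_apply]
          split_ifs <;> simp
        · rw [smul_eq_mul, norm_mul, Complex.norm_real, Real.norm_eq_abs, abs_of_nonneg hg]
          rw [mul_comm]
          apply mul_le_mul _ le_rfl hg (by norm_num : (0:ℝ) ≤ 6)
          split_ifs with h
          · exact pauliDot_abs_le (w y) (hw y) σ τ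
          · simp
  rw [Complex.normSq_eq_norm_sq]
  have h1 : (0 : ℝ) ≤ 1 + 6 * g := by linarith
  exact pow_le_pow_left₀ (norm_nonneg _) habs 2

/-- The variational lower bound
`𝓔_HF(γ) ≥ (g/2)|Λ| + min_w { Tr[(T⊗1 − g Σ_x E_{x,x}⊗(w⃗_x·σ⃗))₋] + (g/2) Σ_x |w⃗_x|² }`,
the minimum being over all families `w = (w⃗_x)_{x∈Λ}` with `|w⃗_x| ≤ 2`. -/
theorem hf_variational_lower_bound (d L : ℕ) [NeZero L] (hd : 1 ≤ d) (hL : 2 ∣ L)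
    (g : ℝ) (hg : 0 < g)
    (γ : Matrix (Lam d L × Fin 2) (Lam d L × Fin 2) ℂ) (hγ : IsOPDM (L ^ d) γ) :
    Ehf d L g γ ≥ g / 2 * (L : ℝ) ^ d
      + sInf {E : ℝ | ∃ w : Lam d L → EuclideanSpace ℝ (Fin 3),
          (∀ x, ‖w x‖ ≤ 2) ∧
          E = (matNegPart (hopT d L ⊗ₖ (1 : Matrix (Fin 2) (Fin 2) ℂ)
                - (g : ℂ) • ∑ x : Lam d L,
                    Matrix.single x x (1 : ℂ) ⊗ₖ pauliDot (w x))).trace.re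
              + g / 2 * ∑ x : Lam d L, ‖w x‖ ^ 2} := by
  classical
  obtain ⟨hpsd, h1psd, htr⟩ := hγ
  -- the spin vector of γ
  set t1 : Lam d L → ℝ := fun x => (sigma1 * spinBlock γ x).trace.re with ht1
  set t2 : Lam d L → ℝ := fun x => (sigma2 * spinBlock γ x).trace.re with ht2
  set t3 : Lam d L → ℝ := fun x => (sigma3 * spinBlock γ x).trace.re with ht3
  set w : Lam d L → EuclideanSpace ℝ (Fin 3) :=
    fun x => (WithLp.equiv 2 (Fin 3 → ℝ)).symm ![t1 x, t2 x, t3 x] with hwdef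
  have hw0 : ∀ x, (w x) 0 = t1 x := fun x => rfl
  have hw1 : ∀ x, (w x) 1 = t2 x := fun x => rfl
  have hw2 : ∀ x, (w x) 2 = t3 x := fun x => rfl
  have hwnormsq : ∀ x, ‖w x‖ ^ 2 = t1 x ^ 2 + t2 x ^ 2 + t3 x ^ 2 := by
    intro x
    rw [EuclideanSpace.norm_eq, Real.sq_sqrt (by positivity)]
    rw [Fin.sum_univ_three, hw0, hw1, hw2]
    simp [Real.norm_eq_abs, sq_abs]
  have hwle : ∀ x, ‖w x‖ ≤ 2 := by
    intro x
    have h4 := spin_vec_bound hpsd h1psd x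
    nlinarith [norm_nonneg (w x), hwnormsq x]
  set H := hopT d L ⊗ₖ (1 : Matrix (Fin 2) (Fin 2) ℂ)
      - (g : ℂ) • ∑ x : Lam d L, Matrix.single x x (1 : ℂ) ⊗ₖ pauliDot (w x)
    with hHdef
  have hHherm : H.IsHermitian := Hw_herm d L g w
  -- membership
  have hmem : (matNegPart H).trace.re + g / 2 * ∑ x : Lam d L, ‖w x‖ ^ 2
      ∈ {E : ℝ | ∃ w : Lam d L → EuclideanSpace ℝ (Fin 3),
          (∀ x, ‖w x‖ ≤ 2) ∧
          E = (matNegPart (hopT d L ⊗ₖ (1 : Matrix (Fin 2) (Fin 2) ℂ)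
                - (g : ℂ) • ∑ x : Lam d L,
                    Matrix.single x x (1 : ℂ) ⊗ₖ pauliDot (w x))).trace.re
              + g / 2 * ∑ x : Lam d L, ‖w x‖ ^ 2} := ⟨w, hwle, rfl⟩
  -- bounded below
  have hbdd : BddBelow {E : ℝ | ∃ w : Lam d L → EuclideanSpace ℝ (Fin 3),
          (∀ x, ‖w x‖ ≤ 2) ∧
          E = (matNegPart (hopT d L ⊗ₖ (1 : Matrix (Fin 2) (Fin 2) ℂ)
                - (g : ℂ) • ∑ x : Lam d L,
                    Matrix.single x x (1 : ℂ) ⊗ₖ pauliDot (w x))).trace.re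
              + g / 2 * ∑ x : Lam d L, ‖w x‖ ^ 2} := by
    refine ⟨-(((Fintype.card (Lam d L × Fin 2) : ℝ)
        + (Fintype.card (Lam d L × Fin 2) : ℝ) ^ 2 * (1 + 6 * g) ^ 2) / 2), ?_⟩
    rintro E ⟨w', hw', rfl⟩
    have hlb := negpart_trace_ge (Hw_herm d L g w') ((1 + 6 * g) ^ 2)
      (Hw_entry_bound d L g hg.le w' hw')
    have h2 : (0 : ℝ) ≤ g / 2 * ∑ x : Lam d L, ‖w' x‖ ^ 2 := by positivity
    linarith
  have hsInf := csInf_le hbdd hmem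
  -- sum of densities
  have hρsum : ∑ x : Lam d L, (spinBlock γ x).trace.re = (L : ℝ) ^ d := by
    have h : ∑ x : Lam d L, (spinBlock γ x).trace = ((L ^ d : ℕ) : ℂ) := by
      rw [← htr]
      simp [Matrix.trace, Matrix.diag, spinBlock, Fintype.sum_prod_type]
    have h2 := congrArg Complex.re h
    rw [Complex.re_sum] at h2
    simp only [Complex.natCast_re] at h2
    rw [h2]
    push_cast
    ring
  -- trace of pauli blocks
  have htrace_pauli : ∀ x : Lam d L,
      ((Matrix.single x x (1 : ℂ) ⊗ₖ pauliDot (w x)) * γ).trace.re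
        = t1 x ^ 2 + t2 x ^ 2 + t3 x ^ 2 := by
    intro x
    rw [trace_kron_std]
    have hpd : pauliDot (w x) * spinBlock γ x
        = (t1 x : ℂ) • (sigma1 * spinBlock γ x) + (t2 x : ℂ) • (sigma2 * spinBlock γ x)
          + (t3 x : ℂ) • (sigma3 * spinBlock γ x) := by
      rw [pauliDot, hw0, hw1, hw2]
      rw [Matrix.add_mul, Matrix.add_mul, Matrix.smul_mul, Matrix.smul_mul, Matrix.smul_mul]
    rw [hpd, Matrix.trace_add, Matrix.trace_add, Matrix.trace_smul, Matrix.trace_smul,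
      Matrix.trace_smul]
    simp only [Complex.add_re, smul_eq_mul, Complex.mul_re, Complex.ofReal_re,
      Complex.ofReal_im, zero_mul, sub_zero]
    simp only [ht1, ht2, ht3]
    ring
  -- trace of H against γ
  have hHγ : (H * γ).trace.re = ((hopT d L ⊗ₖ (1 : Matrix (Fin 2) (Fin 2) ℂ)) * γ).trace.re
      - g * ∑ x : Lam d L, (t1 x ^ 2 + t2 x ^ 2 + t3 x ^ 2) := by
    rw [hHdef, Matrix.sub_mul, Matrix.trace_sub, Complex.sub_re]
    congr 1
    rw [Matrix.smul_mul, Matrix.trace_smul, Matrix.sum_mul, Matrix.trace_sum]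
    rw [smul_eq_mul, Complex.mul_re]
    simp only [Complex.ofReal_re, Complex.ofReal_im, zero_mul, sub_zero]
    rw [Complex.re_sum]
    rw [Finset.sum_congr rfl fun x _ => htrace_pauli x]
  -- spectral bound
  have hkey : (matNegPart H).trace.re ≤ (H * γ).trace.re := by
    have hmin := trace_mul_ge_sum_min hHherm hpsd h1psd
    have htm : (matNegPart H).trace.re = ∑ i, min (hHherm.eigenvalues i) 0 := by
      rw [trace_matNegPart hHherm, Complex.re_sum]
      simp
    rw [htm]
    exact hmin
  -- ∑ ρ² ≥ L^d
  have hcard : (Fintype.card (Lam d L) : ℝ) = (L : ℝ) ^ d := by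
    simp [ZMod.card]
  have hρsq : (L : ℝ) ^ d ≤ ∑ x : Lam d L, ((spinBlock γ x).trace.re) ^ 2 := by
    have hstep : ∑ x : Lam d L, (2 * (spinBlock γ x).trace.re - 1)
        ≤ ∑ x : Lam d L, ((spinBlock γ x).trace.re) ^ 2 :=
      Finset.sum_le_sum fun x _ => by nlinarith [sq_nonneg ((spinBlock γ x).trace.re - 1)]
    have heq : ∑ x : Lam d L, (2 * (spinBlock γ x).trace.re - 1) = (L : ℝ) ^ d := by
      rw [Finset.sum_sub_distrib, ← Finset.mul_sum, hρsum]
      simp only [Finset.sum_const, Finset.card_univ, nsmul_eq_mul, mul_one]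
      rw [hcard]
      ring
    linarith
  -- final assembly
  rw [ge_iff_le, Ehf, Finset.sum_sub_distrib, mul_sub]
  have hsum_norm : ∑ x : Lam d L, ‖w x‖ ^ 2
      = ∑ x : Lam d L, (t1 x ^ 2 + t2 x ^ 2 + t3 x ^ 2) :=
    Finset.sum_congr rfl fun x _ => hwnormsq x
  rw [hsum_norm] at hsInf
  have hmul : g / 2 * (L : ℝ) ^ d ≤ g / 2 * ∑ x : Lam d L, ((spinBlock γ x).trace.re) ^ 2 :=
    mul_le_mul_of_nonneg_left hρsq (by linarith)
  simp only [ht1, ht2, ht3] at hsInf hHγ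
  have hgv : g * (∑ x : Lam d L, (((sigma1 * spinBlock γ x).trace.re) ^ 2
      + ((sigma2 * spinBlock γ x).trace.re) ^ 2 + ((sigma3 * spinBlock γ x).trace.re) ^ 2))
      = 2 * (g / 2 * (∑ x : Lam d L, (((sigma1 * spinBlock γ x).trace.re) ^ 2
      + ((sigma2 * spinBlock γ x).trace.re) ^ 2
      + ((sigma3 * spinBlock γ x).trace.re) ^ 2))) := by
    ring
  linarith
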